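/- For all positive integers $D$ and all integers $m\ge n\ge 1$, the probability that $D$ divides the product $B_nB_m$ satisfies $\mathbf P\{D\mid B_nB_m\} = \frac{1}{2^{n}2^{m-n}}\sum_{k=0}^{m-n}\binom{m-n}{k}\,\frac1D\sum_{j=0}^{D-1}\sum_{h=0}^{n}\binom{n}{h}\, e^{2i\pi\frac{j}{D}(h^2+kh)}$. -/

import Mathlib

open MeasureTheory ProbabilityTheory Finset Real

noncomputable section

lemma sum_exp_dvd (D a : ℕ) (hD : 0 < D) :
    ∑ j ∈ Finset.range D,
        Complex.exp (2 * Real.pi * Complex.I * (j : ℂ) / (D : ℂ) * (a : ℂ))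
      = if D ∣ a then (D : ℂ) else 0 := by
  have hDC : (D : ℂ) ≠ 0 := Nat.cast_ne_zero.2 hD.ne'
  set ζ : ℂ := Complex.exp (2 * Real.pi * Complex.I * (a : ℂ) / (D : ℂ)) with hζ
  have hterm : ∀ j : ℕ, Complex.exp (2 * Real.pi * Complex.I * (j : ℂ) / (D : ℂ) * (a : ℂ)) = ζ ^ j := by
    intro j
    rw [hζ, ← Complex.exp_nat_mul]
    ring_nf
  rw [Finset.sum_congr rfl fun j _ => hterm j]
  have hζD : ζ ^ D = 1 := by
    rw [hζ, ← Complex.exp_nat_mul]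
    have : (D : ℂ) * (2 * Real.pi * Complex.I * (a : ℂ) / (D : ℂ)) = (a : ℂ) * (2 * Real.pi * Complex.I) := by
      field_simp
    rw [this]
    exact_mod_cast Complex.exp_int_mul_two_pi_mul_I (a : ℤ)
  by_cases hdvd : D ∣ a
  · obtain ⟨c, rfl⟩ := hdvd
    have hζ1 : ζ = 1 := by
      rw [hζ]
      have : 2 * Real.pi * Complex.I * ((D * c : ℕ) : ℂ) / (D : ℂ) = (c : ℂ) * (2 * Real.pi * Complex.I) := by
        push_cast; field_simp
      rw [this]
      exact_mod_cast Complex.exp_int_mul_two_pi_mul_I (c : ℤ)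
    simp [hζ1]
  · rw [if_neg hdvd]
    have hζ1 : ζ ≠ 1 := by
      intro h
      rw [hζ, Complex.exp_eq_one_iff] at h
      obtain ⟨N, hN⟩ := h
      apply hdvd
      have hπ : (2 * Real.pi * Complex.I) ≠ 0 := by
        simp [Real.pi_ne_zero, Complex.I_ne_zero, Complex.ofReal_ne_zero]
      have hπ' : (2 * (Real.pi:ℂ) * Complex.I) ≠ 0 := by
        simp [Real.pi_ne_zero, Complex.I_ne_zero, Complex.ofReal_ne_zero]
      have key : (2 * (Real.pi:ℂ) * Complex.I) * (a : ℂ)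
          = (2 * (Real.pi:ℂ) * Complex.I) * ((N : ℂ) * (D : ℂ)) := by
        field_simp at hN
        linear_combination (2 * (Real.pi:ℂ) * Complex.I) * hN
      have h2 : (a : ℂ) = (N : ℂ) * (D : ℂ) := mul_left_cancel₀ hπ' key
      have h3 : (a : ℤ) = N * D := by exact_mod_cast h2
      have : (D : ℤ) ∣ (a : ℤ) := ⟨N, by linarith⟩
      exact_mod_cast this
    rw [geom_sum_eq hζ1, hζD]
    simp

lemma sum_powerset_card_card {α M : Type*} [DecidableEq α] [AddCommMonoid M]
    {s t : Finset α} (hst : Disjoint s t) (f : ℕ → ℕ → M) :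
    ∑ S ∈ (s ∪ t).powerset, f (S ∩ s).card (S ∩ t).card
      = ∑ h ∈ Finset.range (s.card + 1), ∑ k ∈ Finset.range (t.card + 1),
          s.card.choose h • (t.card.choose k • f h k) := by
  have step1 : ∑ S ∈ (s ∪ t).powerset, f (S ∩ s).card (S ∩ t).card
      = ∑ p ∈ s.powerset ×ˢ t.powerset, f p.1.card p.2.card := by
    refine Finset.sum_nbij' (fun S => (S ∩ s, S ∩ t)) (fun p => p.1 ∪ p.2) ?_ ?_ ?_ ?_ ?_
    · intro S hS
      simp only [Finset.mem_product, Finset.mem_powerset]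
      exact ⟨Finset.inter_subset_right, Finset.inter_subset_right⟩
    · intro p hp
      simp only [Finset.mem_product, Finset.mem_powerset] at hp ⊢
      exact Finset.union_subset_union hp.1 hp.2
    · intro S hS
      simp only [Finset.mem_powerset] at hS
      show S ∩ s ∪ S ∩ t = S
      rw [← Finset.inter_union_distrib_left]
      exact Finset.inter_eq_left.2 hS
    · intro p hp
      simp only [Finset.mem_product, Finset.mem_powerset] at hp
      have h1 : (p.1 ∪ p.2) ∩ s = p.1 := by
        rw [Finset.union_inter_distrib_right, Finset.inter_eq_left.2 hp.1,
          Finset.disjoint_iff_inter_eq_empty.1 (hst.symm.mono_left hp.2), Finset.union_empty]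
      have h2 : (p.1 ∪ p.2) ∩ t = p.2 := by
        rw [Finset.union_inter_distrib_right, Finset.inter_eq_left.2 hp.2,
          Finset.disjoint_iff_inter_eq_empty.1 (hst.mono_left hp.1), Finset.empty_union]
      show ((p.1 ∪ p.2) ∩ s, (p.1 ∪ p.2) ∩ t) = p
      rw [h1, h2]
    · intro S hS; rfl
  rw [step1, Finset.sum_product]
  rw [Finset.sum_powerset_apply_card (fun h => ∑ S2 ∈ t.powerset, f h S2.card)]
  refine Finset.sum_congr rfl fun h _ => ?_
  rw [Finset.sum_powerset_apply_card (fun k => f h k), Finset.smul_sum]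

open MeasureTheory ProbabilityTheory

lemma prob_core {Ω : Type*} [MeasurableSpace Ω] (P : Measure Ω) [IsProbabilityMeasure P]
    (b : ℕ → Ω → ℕ) (hmeas : ∀ i, Measurable (b i))
    (hindep : iIndepFun b P)
    (h0 : ∀ i, P {ω | b i ω = 0} = 1/2) (h1 : ∀ i, P {ω | b i ω = 1} = 1/2)
    (B : ℕ → Ω → ℕ) (hB : ∀ n ω, B n ω = ∑ i ∈ Finset.range n, b (i + 1) ω)
    (D n m : ℕ) (hnm : n ≤ m) :
    P {ω | D ∣ B n ω * B m ω}
      = ∑ S ∈ (Finset.Icc 1 m).powerset,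
          (if D ∣ (S ∩ Finset.Icc 1 n).card * S.card then ((2:ENNReal))⁻¹ ^ m else 0) := by
  classical
  set T : Set Ω := {ω | D ∣ B n ω * B m ω} with hT
  set E : Finset ℕ → Set Ω :=
    fun S => ⋂ i ∈ Finset.Icc 1 m, b i ⁻¹' {if i ∈ S then 1 else 0} with hE
  -- value of each b's preimage probability
  have hhalf : ∀ i (c : ℕ), c ≤ 1 → P (b i ⁻¹' {c}) = 2⁻¹ := by
    intro i c hc
    have hset : ∀ c : ℕ, b i ⁻¹' {c} = {ω | b i ω = c} := by
      intro c; ext ω; simp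
    interval_cases c
    · rw [hset, h0 i, one_div]
    · rw [hset, h1 i, one_div]
  have hPE : ∀ S, P (E S) = (2:ENNReal)⁻¹ ^ m := by
    intro S
    rw [hE]
    rw [hindep.measure_inter_preimage_eq_mul (Finset.Icc 1 m)
      (sets := fun i => {if i ∈ S then 1 else 0}) (fun i _ => measurableSet_singleton _)]
    rw [Finset.prod_congr rfl (fun i _ => hhalf i _ (by split <;> simp))]
    rw [Finset.prod_const, Nat.card_Icc, Nat.add_sub_cancel]
  have hEmeas : ∀ S, MeasurableSet (E S) := by
    intro S
    exact MeasurableSet.biInter (Finset.Icc 1 m).countable_toSet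
      (fun i _ => (hmeas i) (measurableSet_singleton _))
  -- value of B on E S
  have hBval : ∀ S, ∀ ω ∈ E S, ∀ r, r ≤ m → B r ω = (S ∩ Finset.Icc 1 r).card := by
    intro S ω hω r hr
    simp only [hE, Set.mem_iInter, Set.mem_preimage, Set.mem_singleton_iff] at hω
    rw [hB]
    have step : ∀ i ∈ Finset.range r, b (i + 1) ω = if i + 1 ∈ S then 1 else 0 := by
      intro i hi
      exact hω (i + 1) (Finset.mem_Icc.2 ⟨Nat.le_add_left 1 i, by
        have := Finset.mem_range.1 hi; omega⟩)
    rw [Finset.sum_congr rfl step, ← Finset.card_filter]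
    rw [Finset.inter_comm, ← Finset.filter_mem_eq_inter]
    refine Finset.card_bij' (fun i _ => i + 1) (fun j _ => j - 1) ?_ ?_ ?_ ?_
    · intro i hi
      simp only [Finset.mem_filter, Finset.mem_range] at hi
      simp only [Finset.mem_filter, Finset.mem_Icc]
      exact ⟨⟨by omega, by omega⟩, hi.2⟩
    · intro j hj
      simp only [Finset.mem_filter, Finset.mem_Icc] at hj
      simp only [Finset.mem_filter, Finset.mem_range]
      refine ⟨by omega, ?_⟩
      rw [Nat.sub_add_cancel hj.1.1]
      exact hj.2
    · intro i hi; rfl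
    · intro j hj
      simp only [Finset.mem_filter, Finset.mem_Icc] at hj
      show j - 1 + 1 = j
      omega
  -- the a.s. set
  set A : Set Ω := {ω | ∀ i ∈ Finset.Icc 1 m, b i ω ≤ 1} with hA
  have hAnull : P Aᶜ = 0 := by
    have hper : ∀ i, P {ω | ¬ b i ω ≤ 1} = 0 := by
      intro i
      have hd : Disjoint {ω | b i ω = 0} {ω | b i ω = 1} := by
        rw [Set.disjoint_left]; intro ω hω0 hω1
        simp only [Set.mem_setOf_eq] at hω0 hω1; omega
      have hm0 : MeasurableSet {ω | b i ω = 0} := (hmeas i) (measurableSet_singleton 0)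
      have hm1 : MeasurableSet {ω | b i ω = 1} := (hmeas i) (measurableSet_singleton 1)
      have hu : P ({ω | b i ω = 0} ∪ {ω | b i ω = 1}) = 1 := by
        rw [measure_union hd hm1, h0 i, h1 i]
        rw [ENNReal.div_add_div_same, one_add_one_eq_two,
          ENNReal.div_self (by norm_num) (by norm_num)]
      have hc : P ({ω | b i ω = 0} ∪ {ω | b i ω = 1})ᶜ = 0 := by
        rw [measure_compl (hm0.union hm1) (measure_ne_top P _), hu, measure_univ, tsub_self]
      refine measure_mono_null ?_ hc
      intro ω hω
      simp only [Set.mem_setOf_eq, Set.mem_compl_iff, Set.mem_union] at hω ⊢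
      omega
    have hsub : Aᶜ ⊆ ⋃ i ∈ Finset.Icc 1 m, {ω | ¬ b i ω ≤ 1} := by
      intro ω hω
      have hω' : ¬ (∀ i ∈ Finset.Icc 1 m, b i ω ≤ 1) := hω
      push_neg at hω'
      obtain ⟨i, hi, hgt⟩ := hω'
      exact Set.mem_biUnion hi (show ¬ b i ω ≤ 1 by omega)
    refine measure_mono_null hsub ?_
    exact (measure_biUnion_null_iff (Finset.Icc 1 m).countable_toSet).2 fun i _ => hper i
  -- decomposition
  set cond : Finset ℕ → Prop := fun S => D ∣ (S ∩ Finset.Icc 1 n).card * S.card with hcond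
  have hTA : T ∩ A = ⋃ S ∈ (Finset.Icc 1 m).powerset.filter cond, E S := by
    ext ω
    constructor
    · rintro ⟨hωT, hωA⟩
      set S := (Finset.Icc 1 m).filter (fun i => b i ω = 1) with hS
      have hωE : ω ∈ E S := by
        simp only [hE, Set.mem_iInter, Set.mem_preimage, Set.mem_singleton_iff]
        intro i hi
        by_cases hbi : b i ω = 1
        · have hiS : i ∈ S := by rw [hS, Finset.mem_filter]; exact ⟨hi, hbi⟩
          rw [if_pos hiS, hbi]
        · have hble : b i ω ≤ 1 := hωA i hi
          have hiS : i ∉ S := by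
            rw [hS, Finset.mem_filter]
            exact fun h => hbi h.2
          rw [if_neg hiS]
          omega
      have hmem : S ∈ (Finset.Icc 1 m).powerset.filter cond := by
        refine Finset.mem_filter.2 ⟨Finset.mem_powerset.2 (Finset.filter_subset _ _), ?_⟩
        have e1 : B n ω = (S ∩ Finset.Icc 1 n).card := hBval S ω hωE n hnm
        have e2 : B m ω = S.card := by
          rw [hBval S ω hωE m le_rfl, Finset.inter_eq_left.2 (Finset.filter_subset _ _)]
        show D ∣ (S ∩ Finset.Icc 1 n).card * S.card
        rw [← e1, ← e2]
        exact hωT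
      exact Set.mem_biUnion hmem hωE
    · intro hω
      simp only [Set.mem_iUnion, exists_prop] at hω
      obtain ⟨S, hSmem, hωE⟩ := hω
      obtain ⟨hSsub, hScond⟩ := Finset.mem_filter.1 hSmem
      have hSsub' := Finset.mem_powerset.1 hSsub
      constructor
      · have e1 : B n ω = (S ∩ Finset.Icc 1 n).card := hBval S ω hωE n hnm
        have e2 : B m ω = S.card := by
          rw [hBval S ω hωE m le_rfl, Finset.inter_eq_left.2 hSsub']
        show D ∣ B n ω * B m ω
        rw [e1, e2]; exact hScond
      · intro i hi
        simp only [hE, Set.mem_iInter, Set.mem_preimage, Set.mem_singleton_iff] at hωE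
        rw [hωE i hi]
        split <;> omega
  have hdisj : (↑((Finset.Icc 1 m).powerset.filter cond) : Set (Finset ℕ)).PairwiseDisjoint E := by
    intro S hS S' hS' hne
    simp only [Finset.coe_filter, Set.mem_setOf_eq, Finset.mem_powerset] at hS hS'
    rw [Function.onFun, Set.disjoint_left]
    intro ω hωS hωS'
    apply hne
    simp only [hE, Set.mem_iInter, Set.mem_preimage, Set.mem_singleton_iff] at hωS hωS'
    apply Finset.ext
    intro i
    by_cases hi : i ∈ Finset.Icc 1 m
    · have := (hωS i hi).symm.trans (hωS' i hi)
      constructor <;> intro hmem <;> by_contra hmem' <;> simp [hmem, hmem'] at this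
    · constructor <;> intro hmem
      · exact absurd (hS.1 hmem) hi
      · exact absurd (hS'.1 hmem) hi
  have hPT : P T = P (T ∩ A) := by
    refine le_antisymm ?_ (measure_mono Set.inter_subset_left)
    calc P T ≤ P ((T ∩ A) ∪ Aᶜ) := measure_mono (fun ω hω => by
          by_cases hωA : ω ∈ A
          · exact Or.inl ⟨hω, hωA⟩
          · exact Or.inr hωA)
      _ ≤ P (T ∩ A) + P Aᶜ := measure_union_le _ _
      _ = P (T ∩ A) := by rw [hAnull, add_zero]
  rw [hPT, hTA, measure_biUnion_finset hdisj (fun S _ => hEmeas S)]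
  rw [Finset.sum_congr rfl (fun S _ => hPE S)]
  rw [Finset.sum_filter]

/-- formula (2.28) for the probability that `D` divides `B_n · B_m`. -/
theorem prob_dvd_product_bernoulli_sums
    {Ω : Type*} [MeasurableSpace Ω] (P : Measure Ω) [IsProbabilityMeasure P]
    (b : ℕ → Ω → ℕ) (hmeas : ∀ i, Measurable (b i))
    (hindep : iIndepFun b P)
    (h0 : ∀ i, P {ω | b i ω = 0} = 1/2) (h1 : ∀ i, P {ω | b i ω = 1} = 1/2)
    (B : ℕ → Ω → ℕ) (hB : ∀ n ω, B n ω = ∑ i ∈ Finset.range n, b (i + 1) ω)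
    (D n m : ℕ) (hD : 0 < D) (hn : 1 ≤ n) (hnm : n ≤ m) :
    ((P {ω | D ∣ B n ω * B m ω}).toReal : ℂ)
      = (1 / ((2 : ℂ) ^ n * (2 : ℂ) ^ (m - n))) *
          ∑ k ∈ Finset.range (m - n + 1), ((m - n).choose k : ℂ) *
            ((1 / (D : ℂ)) * ∑ j ∈ Finset.range D, ∑ h ∈ Finset.range (n + 1),
              (n.choose h : ℂ) *
                Complex.exp (2 * Real.pi * Complex.I * (j : ℂ) / (D : ℂ)
                  * ((h : ℂ) ^ 2 + (k : ℂ) * (h : ℂ)))) := by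
  classical
  have hDC : (D : ℂ) ≠ 0 := Nat.cast_ne_zero.2 hD.ne'
  have h2m : (2 : ℂ) ^ n * (2 : ℂ) ^ (m - n) = (2 : ℂ) ^ m := by
    rw [← pow_add]
    congr 1
    omega
  set f : ℕ → ℕ → ℂ := fun h k => if D ∣ h * (h + k) then ((2:ℂ) ^ m)⁻¹ else 0 with hf
  -- LHS computation
  have hcore := prob_core P b hmeas hindep h0 h1 B hB D n m hnm
  have hLHS : ((P {ω | D ∣ B n ω * B m ω}).toReal : ℂ)
      = ∑ S ∈ (Finset.Icc 1 m).powerset,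
          (if D ∣ (S ∩ Finset.Icc 1 n).card * S.card then ((2:ℂ) ^ m)⁻¹ else 0) := by
    rw [hcore, ENNReal.toReal_sum (fun S _ => by
      split
      · exact (ENNReal.pow_ne_top (by norm_num))
      · exact ENNReal.zero_ne_top)]
    push_cast
    refine Finset.sum_congr rfl fun S _ => ?_
    split
    · rw [ENNReal.toReal_pow, ENNReal.toReal_inv]
      push_cast
      rw [inv_pow]
      norm_num
    · simp
  -- decompose into two intervals
  set s : Finset ℕ := Finset.Icc 1 n with hs
  set t : Finset ℕ := Finset.Icc (n+1) m with ht
  have hst : Disjoint s t := by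
    rw [Finset.disjoint_left]
    intro a ha hb
    rw [hs, Finset.mem_Icc] at ha
    rw [ht, Finset.mem_Icc] at hb
    omega
  have hun : s ∪ t = Finset.Icc 1 m := by
    ext i
    simp only [Finset.mem_union, hs, ht, Finset.mem_Icc]
    omega
  have hcs : s.card = n := by rw [hs, Nat.card_Icc]; omega
  have hct : t.card = m - n := by rw [ht, Nat.card_Icc]; omega
  have hLHS2 : ((P {ω | D ∣ B n ω * B m ω}).toReal : ℂ)
      = ∑ h ∈ Finset.range (n + 1), ∑ k ∈ Finset.range (m - n + 1),
          n.choose h • ((m - n).choose k • f h k) := by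
    rw [hLHS, ← hun]
    rw [Finset.sum_congr rfl (fun S hS => ?_)]
    · rw [sum_powerset_card_card hst f, hcs, hct]
    · have hSsub := Finset.mem_powerset.1 hS
      have hcardS : S.card = (S ∩ s).card + (S ∩ t).card := by
        rw [← Finset.card_union_of_disjoint
            (hst.mono Finset.inter_subset_right Finset.inter_subset_right),
          ← Finset.inter_union_distrib_left, Finset.inter_eq_left.2 hSsub]
      have hc1 : S ∩ Finset.Icc 1 n = S ∩ s := by rw [hs]
      rw [hc1, hcardS]
  rw [hLHS2]
  -- RHS computation
  have hrhs : ∀ k : ℕ, ∑ j ∈ Finset.range D, ∑ h ∈ Finset.range (n + 1),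
      (n.choose h : ℂ) * Complex.exp (2 * Real.pi * Complex.I * (j : ℂ) / (D : ℂ)
        * ((h : ℂ) ^ 2 + (k : ℂ) * (h : ℂ)))
      = ∑ h ∈ Finset.range (n + 1),
          (n.choose h : ℂ) * (if D ∣ h * (h + k) then (D : ℂ) else 0) := by
    intro k
    rw [Finset.sum_comm]
    refine Finset.sum_congr rfl fun h _ => ?_
    rw [← Finset.mul_sum]
    congr 1
    have harg : ∀ j : ℕ, Complex.exp (2 * Real.pi * Complex.I * (j : ℂ) / (D : ℂ)
        * ((h : ℂ) ^ 2 + (k : ℂ) * (h : ℂ)))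
        = Complex.exp (2 * Real.pi * Complex.I * (j : ℂ) / (D : ℂ) * ((h * (h + k) : ℕ) : ℂ)) := by
      intro j
      congr 1
      push_cast
      ring
    rw [Finset.sum_congr rfl fun j _ => harg j]
    exact sum_exp_dvd D (h * (h + k)) hD
  conv_rhs => rw [Finset.sum_congr rfl fun k _ => by rw [hrhs k]]
  conv_rhs => rw [Finset.mul_sum]
  rw [Finset.sum_comm]
  refine Finset.sum_congr rfl fun k _ => ?_
  have h2ne : (2 : ℂ) ^ m ≠ 0 := pow_ne_zero m two_ne_zero
  calc ∑ h ∈ Finset.range (n + 1), n.choose h • ((m - n).choose k • f h k)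
      = ∑ h ∈ Finset.range (n + 1), (1 / ((2:ℂ) ^ n * (2:ℂ) ^ (m - n))) *
          (((m - n).choose k : ℂ) * ((1 / (D:ℂ)) *
            ((n.choose h : ℂ) * (if D ∣ h * (h + k) then (D:ℂ) else 0)))) := by
        refine Finset.sum_congr rfl fun h _ => ?_
        simp only [hf, nsmul_eq_mul]
        rw [h2m]
        split_ifs with hdvd
        · field_simp
        · simp
    _ = (1 / ((2:ℂ) ^ n * (2:ℂ) ^ (m - n))) * (((m - n).choose k : ℂ) * ((1 / (D:ℂ)) *
          ∑ h ∈ Finset.range (n + 1),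
            (n.choose h : ℂ) * (if D ∣ h * (h + k) then (D:ℂ) else 0))) := by
        rw [← Finset.mul_sum, ← Finset.mul_sum, ← Finset.mul_sum]
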